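/- The set of α ∈ ℝ for which the quadratic polynomial P_α(z) = z² + e^{2πiα}z is linearizable at 0 is meager (of first Baire category) in ℝ; equivalently, for a generic α ∈ ℝ in the sense of Baire category, P_α admits no local linearizing coordinate near the origin. (Cremer's theorem.) -/

import Mathlib

open Metric Polynomial

/-- The iterated polynomial for `P(z) = z^2 + l z`. -/
noncomputable def crP (l : ℂ) : ℕ → Polynomial ℂ
  | 0 => X
  | n+1 => (crP l n) ^ 2 + C l * crP l n

lemma crP_eval (l z : ℂ) (n : ℕ) :
    (crP l n).eval z = (fun w => w ^ 2 + l * w)^[n] z := by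
  induction n with
  | zero => simp [crP]
  | succ n ih => simp [crP, Function.iterate_succ_apply', ih]

lemma crP_monic_natDegree (l : ℂ) (n : ℕ) :
    (crP l n).Monic ∧ (crP l n).natDegree = 2 ^ n := by
  induction n with
  | zero => exact ⟨monic_X, by simp [crP]⟩
  | succ n ih =>
    obtain ⟨hm, hd⟩ := ih
    have hne : crP l n ≠ 0 := hm.ne_zero
    have hdeg : (crP l n).degree = (2 ^ n : ℕ) := by
      rw [degree_eq_natDegree hne, hd]
    have hsq : ((crP l n) ^ 2).Monic := hm.pow 2
    have hdeg2 : ((crP l n) ^ 2).degree = ((2 ^ (n + 1) : ℕ) : WithBot ℕ) := by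
      rw [degree_pow, hdeg]
      rw [two_smul, ← Nat.cast_add, pow_succ, mul_two]
    have hlt : (C l * crP l n).degree < ((crP l n) ^ 2).degree := by
      have h1 : (C l * crP l n).degree ≤ (crP l n).degree := by
        rcases eq_or_ne l 0 with rfl | hl
        · simp
        · rw [degree_C_mul hl]
      calc (C l * crP l n).degree ≤ (crP l n).degree := h1
        _ < ((crP l n) ^ 2).degree := by
            rw [hdeg, hdeg2]
            exact_mod_cast Nat.pow_lt_pow_right one_lt_two (Nat.lt_succ_self n)
    have hmonic : (crP l (n + 1)).Monic := hsq.add_of_left hlt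
    refine ⟨hmonic, ?_⟩
    have : (crP l (n + 1)).degree = ((2 ^ (n + 1) : ℕ) : WithBot ℕ) := by
      rw [show crP l (n+1) = (crP l n) ^ 2 + C l * crP l n from rfl,
        degree_add_eq_left_of_degree_lt hlt, hdeg2]
    exact natDegree_eq_of_degree_eq_some this

lemma crP_coeff_zero (l : ℂ) (n : ℕ) : (crP l n).coeff 0 = 0 := by
  rw [coeff_zero_eq_eval_zero, crP_eval]
  have := Function.iterate_fixed (f := fun w : ℂ => w ^ 2 + l * w) (x := 0) (by norm_num) n
  simpa using this

lemma crP_coeff_one (l : ℂ) (n : ℕ) : (crP l n).coeff 1 = l ^ n := by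
  induction n with
  | zero => simp [crP]
  | succ n ih =>
    have h0 := crP_coeff_zero l n
    have hsq : ((crP l n) ^ 2).coeff 1 = 0 := by
      rw [sq, coeff_mul]
      simp [Finset.Nat.antidiagonal_succ, h0]
    rw [show crP l (n+1) = (crP l n) ^ 2 + C l * crP l n from rfl]
    rw [coeff_add, hsq, coeff_C_mul, ih, zero_add, pow_succ, mul_comm]

lemma crP_pow_card_le_prod {c : ℝ} (hc : 0 ≤ c) (s : Multiset ℝ)
    (h : ∀ x ∈ s, c ≤ x) : c ^ Multiset.card s ≤ s.prod := by
  induction s using Multiset.induction_on with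
  | empty => simp
  | cons x s ih =>
    rw [Multiset.card_cons, Multiset.prod_cons, pow_succ']
    have hx : c ≤ x := h x (Multiset.mem_cons_self _ _)
    have hs := ih fun y hy => h y (Multiset.mem_cons_of_mem hy)
    exact mul_le_mul hx hs (pow_nonneg hc _) (hc.trans hx)

lemma exists_small_periodic (l : ℂ) (n : ℕ) (hn : 1 ≤ n) (c : ℝ) (hc0 : 0 < c) (hc1 : c ≤ 1)
    (hne : l ^ n ≠ 1) (hsm : ‖l ^ n - 1‖ < c ^ 2 ^ n) :
    ∃ z : ℂ, z ≠ 0 ∧ ‖z‖ ≤ c ∧ (fun w => w ^ 2 + l * w)^[n] z = z := by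
  obtain ⟨hm, hd⟩ := crP_monic_natDegree l n
  set p : Polynomial ℂ := crP l n - X with hp
  have hpc0 : p.coeff 0 = 0 := by simp [hp, crP_coeff_zero]
  obtain ⟨g, hg⟩ : X ∣ p := X_dvd_iff.2 hpc0
  have hdX : (X : Polynomial ℂ).degree < (crP l n).degree := by
    rw [degree_X, degree_eq_natDegree hm.ne_zero, hd]
    exact_mod_cast Nat.one_lt_two_pow (by omega)
  have hpm : p.Monic := by
    rw [hp, sub_eq_add_neg]
    exact hm.add_of_left (by rwa [degree_neg])
  have hpd : p.natDegree = 2 ^ n := by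
    rw [hp, natDegree_sub_eq_left_of_natDegree_lt, hd]
    rw [natDegree_X, hd]
    exact Nat.one_lt_two_pow (by omega)
  have hgm : g.Monic := monic_X.of_mul_monic_left (hg ▸ hpm)
  have hgd : g.natDegree = 2 ^ n - 1 := by
    have := hg ▸ hpd
    rw [natDegree_mul X_ne_zero hgm.ne_zero, natDegree_X] at this
    omega
  have hgc0 : g.coeff 0 = l ^ n - 1 := by
    have h1 : p.coeff 1 = l ^ n - 1 := by
      simp [hp, crP_coeff_one, coeff_X_one]
    rw [hg] at h1
    rwa [show (1 : ℕ) = 0 + 1 from rfl, coeff_X_mul] at h1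
  have hgeval0 : g.eval 0 = l ^ n - 1 := by
    rw [← coeff_zero_eq_eval_zero, hgc0]
  have hsplit : (g.roots.card : ℕ) = g.natDegree :=
    (Polynomial.splits_iff_card_roots).1 (IsAlgClosed.splits g)
  -- product of |roots| equals |l^n - 1|
  have hfact : g = (g.roots.map fun a => X - C a).prod :=
    (IsAlgClosed.splits g).eq_prod_roots_of_monic hgm
  have hprod : (g.roots.map fun a => ‖a‖).prod = ‖l ^ n - 1‖ := by
    have h1 : (l ^ n - 1) = (g.roots.map fun a => -a).prod := by
      conv_lhs => rw [← hgeval0, hfact]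
      rw [eval_multiset_prod, Multiset.map_map]
      exact congrArg _ (Multiset.map_congr rfl fun a _ => by simp)
    rw [h1, show ‖(g.roots.map fun a => -a).prod‖ = normHom.toMonoidHom (g.roots.map fun a => -a).prod from rfl, map_multiset_prod, Multiset.map_map]
    exact congrArg _ (Multiset.map_congr rfl fun a _ => by simp)
  -- there is a root of modulus ≤ c
  have hex : ∃ a ∈ g.roots, ‖a‖ ≤ c := by
    by_contra hcon
    push_neg at hcon
    have hle : c ^ Multiset.card g.roots ≤ (g.roots.map fun a => ‖a‖).prod := by
      have := crP_pow_card_le_prod hc0.le (g.roots.map fun a => ‖a‖) ?_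
      · rwa [Multiset.card_map] at this
      · intro x hx
        obtain ⟨a, ha, rfl⟩ := Multiset.mem_map.1 hx
        exact (hcon a ha).le
    have : c ^ (2 ^ n) ≤ c ^ g.roots.card := by
      apply pow_le_pow_of_le_one hc0.le hc1
      rw [hsplit, hgd]; omega
    rw [hprod] at hle
    exact absurd (lt_of_le_of_lt (this.trans hle) hsm) (lt_irrefl _)
  obtain ⟨a, ha, hac⟩ := hex
  have hgne : g ≠ 0 := hgm.ne_zero
  have hroot : g.eval a = 0 := (Polynomial.mem_roots hgne).1 ha
  have ha0 : a ≠ 0 := by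
    rintro rfl
    rw [hgeval0] at hroot
    exact hne (sub_eq_zero.1 hroot)
  refine ⟨a, ha0, hac, ?_⟩
  have hpa : p.eval a = 0 := by rw [hg]; simp [hroot]
  have : (crP l n).eval a = a := by
    have := hpa
    rw [hp] at this
    simp only [eval_sub, eval_X, sub_eq_zero] at this
    exact this
  rwa [crP_eval] at this

lemma crLam_abs (α : ℝ) : ‖Complex.exp (2 * Real.pi * Complex.I * (α : ℂ))‖ = 1 := by
  rw [Complex.norm_exp]
  have : (2 * (Real.pi : ℂ) * Complex.I * (α : ℂ)).re = 0 := by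
    simp [Complex.mul_re, Complex.mul_im]
  rw [this, Real.exp_zero]

lemma crLam_pow_ne_one {α : ℝ} (hirr : Irrational α) {n : ℕ} (hn : 1 ≤ n) :
    (Complex.exp (2 * Real.pi * Complex.I * (α : ℂ))) ^ n ≠ 1 := by
  intro h
  rw [← Complex.exp_nat_mul, Complex.exp_eq_one_iff] at h
  obtain ⟨m, hm⟩ := h
  have hpi : (2 * (Real.pi : ℂ) * Complex.I) ≠ 0 := by
    simp [Real.pi_ne_zero, Complex.I_ne_zero]
  have hna : (n : ℂ) * (α : ℂ) = (m : ℂ) := by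
    apply mul_left_cancel₀ hpi
    rw [show (2 * (Real.pi : ℂ) * Complex.I) * ((n : ℂ) * (α : ℂ))
        = (n : ℂ) * (2 * (Real.pi : ℂ) * Complex.I * (α : ℂ)) by ring, hm]
    ring
  have hnr : (n : ℝ) * α = (m : ℝ) := by
    have := congrArg Complex.re hna
    push_cast at this ⊢
    simpa using this
  have hn0 : (n : ℝ) ≠ 0 := Nat.cast_ne_zero.2 (by omega)
  apply hirr
  refine ⟨(m : ℚ) / (n : ℚ), ?_⟩
  push_cast
  field_simp
  linarith [hnr]

/-- The open dense sets used in the Baire category argument. -/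
def crU (k : ℕ) : Set ℝ :=
  {α : ℝ | ∃ n : ℕ, 1 ≤ n ∧
    ‖(Complex.exp (2 * Real.pi * Complex.I * (α : ℂ))) ^ n - 1‖
      < (1 / (k + 1) : ℝ) ^ 2 ^ n}

lemma crU_open (k : ℕ) : IsOpen (crU k) := by
  have : crU k = ⋃ n : ℕ, {α : ℝ | 1 ≤ n ∧
      ‖(Complex.exp (2 * Real.pi * Complex.I * (α : ℂ))) ^ n - 1‖
        < (1 / (k + 1) : ℝ) ^ 2 ^ n} := by
    ext α; simp [crU]
  rw [this]
  apply isOpen_iUnion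
  intro n
  by_cases hn : 1 ≤ n
  · have : {α : ℝ | 1 ≤ n ∧
        ‖(Complex.exp (2 * Real.pi * Complex.I * (α : ℂ))) ^ n - 1‖
          < (1 / (k + 1) : ℝ) ^ 2 ^ n}
        = {α : ℝ | ‖(Complex.exp (2 * Real.pi * Complex.I * (α : ℂ))) ^ n - 1‖
          < (1 / (k + 1) : ℝ) ^ 2 ^ n} := by
      ext α; simp [hn]
    rw [this]
    apply isOpen_lt ?_ continuous_const
    exact continuous_norm.comp (by fun_prop)
  · have : {α : ℝ | 1 ≤ n ∧
        ‖(Complex.exp (2 * Real.pi * Complex.I * (α : ℂ))) ^ n - 1‖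
          < (1 / (k + 1) : ℝ) ^ 2 ^ n} = ∅ := by
      ext α; simp [hn]
    rw [this]; exact isOpen_empty

lemma crU_dense (k : ℕ) : Dense (crU k) := by
  apply Dense.mono ?_ (Rat.denseRange_cast (𝕜 := ℝ))
  rintro _ ⟨q, rfl⟩
  refine ⟨q.den, q.pos, ?_⟩
  have hden : (Complex.exp (2 * Real.pi * Complex.I * ((q : ℝ) : ℂ))) ^ q.den = 1 := by
    rw [← Complex.exp_nat_mul]
    have hq : ((q.den : ℂ)) * ((q : ℝ) : ℂ) = (q.num : ℂ) := by
      have hdq : ((q.den : ℚ)) ≠ 0 := by exact_mod_cast q.den_nz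
      have h0 : (q.num : ℚ) = q * q.den := (div_eq_iff hdq).1 (Rat.num_div_den q)
      have h1 : ((q.num : ℚ) : ℂ) = ((q : ℚ) : ℂ) * (((q.den : ℚ)) : ℂ) := by
        exact_mod_cast congrArg (fun x : ℚ => (x : ℂ)) h0
      push_cast at h1 ⊢
      rw [h1]
      ring
    rw [show (q.den : ℂ) * (2 * Real.pi * Complex.I * ((q : ℝ) : ℂ))
        = ((q.den : ℂ) * ((q : ℝ) : ℂ)) * (2 * Real.pi * Complex.I) by ring, hq]
    exact_mod_cast Complex.exp_int_mul_two_pi_mul_I q.num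
  rw [hden, sub_self, norm_zero]
  positivity

/-- Cremer's theorem: the set of `α ∈ ℝ` for which `P_α(z) = z² + e^{2πiα} z`
is linearizable at `0` is meager in `ℝ`. -/
theorem cremer_generic_nonlinearizable :
    IsMeagre {α : ℝ | ∃ r : ℝ, 0 < r ∧ ∃ h : ℂ → ℂ,
      DifferentiableOn ℂ h (ball (0 : ℂ) r) ∧
      Set.InjOn h (ball (0 : ℂ) r) ∧
      h 0 = 0 ∧
      ∀ z ∈ ball (0 : ℂ) r,
        (h z) ^ 2 + Complex.exp (2 * Real.pi * Complex.I * (α : ℂ)) * h z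
          = h (Complex.exp (2 * Real.pi * Complex.I * (α : ℂ)) * z)} := by
  have hmeag1 : {x : ℝ | ¬ Irrational x}ᶜ ∈ residual ℝ := by
    exact Filter.mem_of_superset eventually_residual_irrational (fun x hx => by simpa using hx)
  have hres : (⋂ k, crU k) ∈ residual ℝ := by
    rw [countable_iInter_mem]
    intro k
    exact mem_residual.2 ⟨crU k, subset_rfl, (crU_open k).isGδ, crU_dense k⟩
  have hU : IsMeagre ({x : ℝ | ¬ Irrational x} ∪ (⋂ k, crU k)ᶜ) := by
    rw [IsMeagre, Set.compl_union, compl_compl]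
    exact Filter.inter_mem hmeag1 hres
  apply hU.mono
  intro α hα
  rw [Set.mem_union]
  by_contra hcon
  push_neg at hcon
  obtain ⟨hcon1, hcon2⟩ := hcon
  have hirr : Irrational α := not_not.1 hcon1
  have hS : α ∈ ⋂ k, crU k := not_not.1 (by simpa using hcon2)
  obtain ⟨ρ, hρ, h, hdiff, hinj, h0, hfe⟩ := hα
  set l : ℂ := Complex.exp (2 * Real.pi * Complex.I * (α : ℂ)) with hl
  have habsl : ‖l‖ = 1 := crLam_abs α
  have hball : ball (0:ℂ) ρ ∈ nhds 0 := isOpen_ball.mem_nhds (mem_ball_self hρ)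
  have han : AnalyticAt ℂ h 0 := hdiff.analyticAt hball
  -- h is not locally constant near 0
  have hnc : ¬ ∀ᶠ z in nhds (0:ℂ), h z = h 0 := by
    intro hev
    rw [Metric.eventually_nhds_iff] at hev
    obtain ⟨δ, hδ, hev⟩ := hev
    set m := min δ ρ with hm
    have hm0 : 0 < m := lt_min hδ hρ
    have key : ∀ t : ℝ, 0 < t → t < m → ((t:ℂ) ∈ ball (0:ℂ) ρ ∧ h (t:ℂ) = 0) := by
      intro t ht htm
      have hnt : ‖(t:ℂ)‖ = t := by
        rw [Complex.norm_real, Real.norm_eq_abs, abs_of_pos ht]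
      constructor
      · rw [mem_ball_zero_iff, hnt]
        exact htm.trans_le (min_le_right _ _)
      · rw [← h0]
        apply hev
        rw [dist_zero_right, hnt]
        exact htm.trans_le (min_le_left _ _)
    obtain ⟨hmem1, hz1⟩ := key (m/2) (by positivity) (by linarith)
    obtain ⟨hmem2, hz2⟩ := key (m/3) (by positivity) (by linarith)
    have h12 := hinj hmem1 hmem2 (hz1.trans hz2.symm)
    have : (m/2 : ℝ) = m/3 := by exact_mod_cast h12
    linarith
  have hmap := han.eventually_constant_or_nhds_le_map_nhds.resolve_left hnc
  rw [h0] at hmap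
  have himg : h '' ball (0:ℂ) ρ ∈ nhds (0:ℂ) := by
    apply hmap
    rw [Filter.mem_map]
    exact Filter.mem_of_superset hball (Set.subset_preimage_image h _)
  obtain ⟨ε, hε, hball2⟩ := Metric.mem_nhds_iff.1 himg
  obtain ⟨k, hk⟩ := exists_nat_one_div_lt hε
  obtain ⟨n, hn1, habs⟩ := Set.mem_iInter.1 hS k
  have hne : l ^ n ≠ 1 := crLam_pow_ne_one hirr hn1
  have hc0 : (0:ℝ) < 1/((k:ℝ)+1) := by positivity
  have hc1 : (1/((k:ℝ)+1):ℝ) ≤ 1 := by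
    rw [div_le_one (by positivity)]
    linarith [Nat.cast_nonneg (α := ℝ) k]
  obtain ⟨z, hz0, hzc, hzfix⟩ := exists_small_periodic l n hn1 _ hc0 hc1 hne habs
  have hzball : z ∈ ball (0:ℂ) ε := by
    rw [mem_ball_zero_iff]
    calc ‖z‖ = ‖z‖ := rfl
      _ ≤ 1/((k:ℝ)+1) := hzc
      _ < ε := hk
  obtain ⟨w, hw, hwz⟩ := hball2 hzball
  have hlm : ∀ m : ℕ, ∀ u : ℂ, u ∈ ball (0:ℂ) ρ → l ^ m * u ∈ ball (0:ℂ) ρ := by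
    intro m u hu
    rw [mem_ball_zero_iff] at hu ⊢
    rw [norm_mul, norm_pow, habsl, one_pow, one_mul]
    exact hu
  have key : ∀ m : ℕ, ∀ u ∈ ball (0:ℂ) ρ,
      (fun x => x ^ 2 + l * x)^[m] (h u) = h (l ^ m * u) := by
    intro m
    induction m with
    | zero => intro u hu; simp
    | succ m ih =>
      intro u hu
      rw [Function.iterate_succ_apply', ih u hu]
      have hstep := hfe (l ^ m * u) (hlm m u hu)
      rw [hstep]
      rw [show l * (l ^ m * u) = l ^ (m+1) * u by ring]
  have h1 := key n w hw
  rw [hwz, hzfix, ← hwz] at h1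
  have heq : l ^ n * w = w := hinj (hlm n w hw) hw h1.symm
  have hw0 : w ≠ 0 := by
    rintro rfl
    exact hz0 (by rw [← hwz, h0])
  have hfin : l ^ n = 1 := by
    have := mul_right_cancel₀ hw0 (heq.trans (one_mul w).symm)
    exact this
  exact hne hfin
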